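/- Let N ≥ 2 and K ≥ 3 be integers and let a : [1,K] → ℝ be a sequence with a(0) := 0 satisfying the recurrence a(s) = (1/(N−1))·(2·a(s+1) + a(s+2)) for all s ∈ [1,K−2]. Then ∑_{s=1}^{K−2} C(K−2,s)·a(s) = (1/N)·∑_{i=1}^{K} C(K,i)·a(i) − (1/N)·(2·a(1) + a(2)). -/
import Mathlib

lemma conv_aux (m : ℕ) (g : ℕ → ℝ) :
    ∑ i ∈ Finset.range (m+2), ((m+1).choose i : ℝ) * g i
      = ∑ i ∈ Finset.range (m+1), (m.choose i : ℝ) * (g i + g (i+1)) := by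
  rw [Finset.sum_range_succ' _ (m+1)]
  have h1 : ∑ i ∈ Finset.range (m+1), ((m+1).choose (i+1) : ℝ) * g (i+1)
      = ∑ i ∈ Finset.range (m+1), ((m.choose i : ℝ) * g (i+1)
          + (m.choose (i+1) : ℝ) * g (i+1)) := by
    apply Finset.sum_congr rfl
    intro i _
    rw [Nat.choose_succ_succ]
    push_cast
    ring
  rw [h1, Finset.sum_add_distrib]
  have h2 : ∑ i ∈ Finset.range (m+1), (m.choose (i+1) : ℝ) * g (i+1)
        + ((m+1).choose 0 : ℝ) * g 0
      = ∑ i ∈ Finset.range (m+1), (m.choose i : ℝ) * g i := by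
    have := Finset.sum_range_succ' (fun i => (m.choose i : ℝ) * g i) (m+1)
    rw [Finset.sum_range_succ] at this
    simp only [Nat.choose_succ_self, Nat.cast_zero, zero_mul, add_zero,
      Nat.choose_zero_right, Nat.cast_one] at this ⊢
    linarith [this]
  have h3 : ∑ i ∈ Finset.range (m+1), (m.choose i : ℝ) * (g i + g (i+1))
      = ∑ i ∈ Finset.range (m+1), (m.choose i : ℝ) * g i
        + ∑ i ∈ Finset.range (m+1), (m.choose i : ℝ) * g (i+1) := by
    rw [← Finset.sum_add_distrib]
    apply Finset.sum_congr rfl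
    intro i _; ring
  rw [h3, ← h2]
  ring

lemma conv_aux2 (m : ℕ) (a : ℕ → ℝ) :
    ∑ i ∈ Finset.range (m+3), ((m+2).choose i : ℝ) * a i
      = ∑ s ∈ Finset.range (m+1), (m.choose s : ℝ) * (a s + 2 * a (s+1) + a (s+2)) := by
  rw [show m + 3 = (m+1) + 2 from rfl, conv_aux (m+1) a, conv_aux m (fun i => a i + a (i+1))]
  apply Finset.sum_congr rfl
  intro i _; ring

theorem stmt_5 (N K : ℕ) (hN : 2 ≤ N) (hK : 3 ≤ K)
    (a : ℕ → ℝ) (ha0 : a 0 = 0)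
    (hrec : ∀ s ∈ Finset.Icc 1 (K - 2),
      a s = (1 / ((N : ℝ) - 1)) * (2 * a (s + 1) + a (s + 2))) :
    ∑ s ∈ Finset.Icc 1 (K - 2), ((K - 2).choose s : ℝ) * a s
      = (1 / (N : ℝ)) * ∑ i ∈ Finset.Icc 1 K, (K.choose i : ℝ) * a i
        - (1 / (N : ℝ)) * (2 * a 1 + a 2) := by
  obtain ⟨m, rfl⟩ : ∃ m, K = m + 2 := ⟨K - 2, by omega⟩
  have hm : 1 ≤ m := by omega
  have hms : m + 2 - 2 = m := by omega
  rw [hms] at hrec ⊢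
  have hNne : (N : ℝ) ≠ 0 := by positivity
  have hN1 : (N : ℝ) - 1 ≠ 0 := by
    have : (2:ℝ) ≤ (N:ℝ) := by exact_mod_cast hN
    linarith
  -- N * a s = a s + 2 a(s+1) + a(s+2) on Icc 1 m
  have hrec' : ∀ s ∈ Finset.Icc 1 m, (N:ℝ) * a s = a s + 2 * a (s+1) + a (s+2) := by
    intro s hs
    have h := hrec s hs
    field_simp at h
    linarith [h]
  -- convert Icc sums to range sums
  have hIcc0 : ∀ (n : ℕ) (f : ℕ → ℝ),
      ∑ i ∈ Finset.range (n+1), f i = f 0 + ∑ i ∈ Finset.Icc 1 n, f i := by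
    intro n f
    rw [Finset.range_eq_Ico, Finset.sum_eq_sum_Ico_succ_bot (by omega) f,
      Finset.Ico_add_one_right_eq_Icc]
  have hIcc : ∀ (n : ℕ) (f : ℕ → ℝ), f 0 = 0 →
      ∑ i ∈ Finset.Icc 1 n, f i = ∑ i ∈ Finset.range (n+1), f i := by
    intro n f hf
    rw [hIcc0 n f, hf, zero_add]
  have key : (N:ℝ) * ∑ s ∈ Finset.Icc 1 m, (m.choose s : ℝ) * a s
      = ∑ i ∈ Finset.Icc 1 (m+2), ((m+2).choose i : ℝ) * a i - (2 * a 1 + a 2) := by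
    rw [Finset.mul_sum]
    have h1 : ∑ s ∈ Finset.Icc 1 m, (N:ℝ) * ((m.choose s : ℝ) * a s)
        = ∑ s ∈ Finset.Icc 1 m, (m.choose s : ℝ) * (a s + 2 * a (s+1) + a (s+2)) := by
      apply Finset.sum_congr rfl
      intro s hs
      rw [← hrec' s hs]; ring
    rw [h1]
    have h2 : ∑ s ∈ Finset.Icc 1 m, (m.choose s : ℝ) * (a s + 2 * a (s+1) + a (s+2))
        = ∑ s ∈ Finset.range (m+1), (m.choose s : ℝ) * (a s + 2 * a (s+1) + a (s+2))
          - (2 * a 1 + a 2) := by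
      rw [hIcc0 m (fun s => (m.choose s : ℝ) * (a s + 2 * a (s+1) + a (s+2)))]
      simp [ha0]
    rw [h2, ← conv_aux2 m a, ← hIcc (m+2) (fun i => ((m+2).choose i : ℝ) * a i) (by simp [ha0])]
  have goal2 : ∑ s ∈ Finset.Icc 1 m, (m.choose s : ℝ) * a s
      = (1/(N:ℝ)) * (∑ i ∈ Finset.Icc 1 (m+2), ((m+2).choose i : ℝ) * a i - (2 * a 1 + a 2)) := by
    rw [← key]; field_simp
  rw [goal2]; ring
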